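/- If a finite metric space (X,d) has p-negative type for some p > 0, i.e. for all choices of points x_1,...,x_k in X and reals α_1,...,α_k with α_1+...+α_k = 0 we have Σ_{i,j} d(x_i,x_j)^p α_i α_j ≤ 0, then for every q with 0 ≤ q < p, (X,d) has strict q-negative type: the inequality Σ_{i,j} d(x_i,x_j)^q α_i α_j ≤ 0 holds with equality only when all α_i = 0. -/

import Mathlib

open Real MeasureTheory Set Finset Filter

namespace NegTypeAux


lemma schur_pow_nonneg {k : ℕ} (v : Fin k → Fin k → ℝ) (γ : Fin k → ℝ) (n : ℕ) :
    0 ≤ ∑ i, ∑ j, γ i * γ j * (∑ c, v i c * v j c) ^ n := by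
  have key : ∀ m : Fin n → Fin k, (∑ i, γ i * ∏ t, v i (m t)) ^ 2
      = ∑ i, ∑ j, γ i * γ j * ((∏ t, v i (m t)) * (∏ t, v j (m t))) := by
    intro m
    rw [sq, Finset.sum_mul_sum]
    exact Finset.sum_congr rfl fun i _ => Finset.sum_congr rfl fun j _ => by ring
  have h1 : (∑ i, ∑ j, γ i * γ j * (∑ c, v i c * v j c) ^ n)
      = ∑ i, ∑ j, ∑ m : Fin n → Fin k,
          γ i * γ j * ((∏ t, v i (m t)) * (∏ t, v j (m t))) := by
    refine Finset.sum_congr rfl fun i _ => Finset.sum_congr rfl fun j _ => ?_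
    rw [Fintype.sum_pow, Finset.mul_sum]
    exact Finset.sum_congr rfl fun m _ => by rw [← Finset.prod_mul_distrib]
  rw [h1]
  have h2 : (∑ i, ∑ j, ∑ m : Fin n → Fin k,
        γ i * γ j * ((∏ t, v i (m t)) * (∏ t, v j (m t))))
      = ∑ m : Fin n → Fin k, ∑ i, ∑ j,
          γ i * γ j * ((∏ t, v i (m t)) * (∏ t, v j (m t))) := by
    calc (∑ i, ∑ j, ∑ m : Fin n → Fin k,
        γ i * γ j * ((∏ t, v i (m t)) * (∏ t, v j (m t))))
        = ∑ i, ∑ m : Fin n → Fin k, ∑ j,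
          γ i * γ j * ((∏ t, v i (m t)) * (∏ t, v j (m t))) :=
        Finset.sum_congr rfl fun i _ => Finset.sum_comm
      _ = ∑ m : Fin n → Fin k, ∑ i, ∑ j,
          γ i * γ j * ((∏ t, v i (m t)) * (∏ t, v j (m t))) := Finset.sum_comm
  rw [h2]
  refine Finset.sum_nonneg fun m _ => ?_
  rw [← key m]
  positivity

lemma exp_gram_nonneg {k : ℕ} (v : Fin k → Fin k → ℝ) (γ : Fin k → ℝ) :
    0 ≤ ∑ i, ∑ j, γ i * γ j * Real.exp (∑ c, v i c * v j c) := by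
  have hs : ∀ i j : Fin k, HasSum (fun n : ℕ => γ i * γ j * ((∑ c, v i c * v j c) ^ n / (n.factorial : ℝ)))
      (γ i * γ j * Real.exp (∑ c, v i c * v j c)) := fun i j => by
    rw [Real.exp_eq_exp_ℝ]
    exact (NormedSpace.expSeries_div_hasSum_exp (𝔸 := ℝ) _).mul_left _
  have hS : HasSum (fun n : ℕ => ∑ i, ∑ j, γ i * γ j * ((∑ c, v i c * v j c) ^ n / (n.factorial : ℝ)))
      (∑ i, ∑ j, γ i * γ j * Real.exp (∑ c, v i c * v j c)) :=
    hasSum_sum fun i _ => hasSum_sum fun j _ => hs i j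
  refine hS.nonneg fun n => ?_
  have h1 : (∑ i, ∑ j, γ i * γ j * ((∑ c, v i c * v j c) ^ n / (n.factorial : ℝ)))
      = (∑ i, ∑ j, γ i * γ j * (∑ c, v i c * v j c) ^ n) / (n.factorial : ℝ) := by
    rw [Finset.sum_div]
    exact Finset.sum_congr rfl fun i _ => by
      rw [Finset.sum_div]; exact Finset.sum_congr rfl fun j _ => by ring
  rw [h1]
  exact div_nonneg (schur_pow_nonneg v γ n) (Nat.cast_nonneg _)

lemma psd_form_exp_nonneg {k : ℕ} (b : Fin k → Fin k → ℝ) (hsymm : ∀ i j, b i j = b j i)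
    (hb : ∀ γ : Fin k → ℝ, 0 ≤ ∑ i, ∑ j, γ i * γ j * b i j) (γ : Fin k → ℝ) :
    0 ≤ ∑ i, ∑ j, γ i * γ j * Real.exp (b i j) := by
  have hPSD : (Matrix.of b).PosSemidef := by
    refine Matrix.posSemidef_iff_dotProduct_mulVec.mpr ⟨?_, ?_⟩
    · ext i j
      simp [Matrix.conjTranspose_apply, hsymm i j]
    · intro y
      have hform : dotProduct (star y) ((Matrix.of b).mulVec y) = ∑ i, ∑ j, y i * y j * b i j := by
        simp only [dotProduct, Matrix.mulVec, Pi.star_apply, star_trivial,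
          Matrix.of_apply]
        exact Finset.sum_congr rfl fun i _ => by
          rw [Finset.mul_sum]; exact Finset.sum_congr rfl fun j _ => by ring
      rw [hform]
      exact hb y
  obtain ⟨C, hC⟩ : ∃ C : Matrix (Fin k) (Fin k) ℝ, Matrix.of b = C.conjTranspose * C := by
    open scoped MatrixOrder Matrix.Norms.L2Operator in
    obtain ⟨C, hC⟩ := CStarAlgebra.nonneg_iff_eq_star_mul_self.mp hPSD.nonneg
    exact ⟨C, hC⟩
  have hbij : ∀ i j, b i j = ∑ c, C c i * C c j := by
    intro i j
    have : Matrix.of b i j = (C.conjTranspose * C) i j := by rw [← hC]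
    simpa [Matrix.mul_apply, Matrix.conjTranspose_apply] using this
  have h := exp_gram_nonneg (fun i c => C c i) γ
  refine le_of_le_of_eq h ?_
  exact Finset.sum_congr rfl fun i _ => Finset.sum_congr rfl fun j _ => by
    rw [← hbij i j]





lemma schoenberg_nonneg {k : ℕ} (a : Fin k → Fin k → ℝ) (hsymm : ∀ i j, a i j = a j i)
    (hdiag : ∀ i, a i i = 0)
    (hneg : ∀ β : Fin k → ℝ, (∑ i, β i) = 0 → (∑ i, ∑ j, β i * β j * a i j) ≤ 0)
    (γ : Fin k → ℝ) : 0 ≤ ∑ i, ∑ j, γ i * γ j * Real.exp (-a i j) := by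
  rcases Nat.eq_zero_or_pos k with hk | hk
  · subst hk; simp
  have i0 : Fin k := ⟨0, hk⟩
  have hone : ∀ (δ : Fin k → ℝ) (f : Fin k → ℝ),
      (∑ i, ∑ j, δ i * δ j * f i) = (∑ i, δ i * f i) * (∑ i, δ i) := by
    intro δ f
    rw [Finset.sum_mul]
    refine Finset.sum_congr rfl fun i _ => ?_
    rw [Finset.mul_sum]
    exact Finset.sum_congr rfl fun j _ => by ring
  have htwo : ∀ (δ : Fin k → ℝ) (f : Fin k → ℝ),
      (∑ i, ∑ j, δ i * δ j * f j) = (∑ i, δ i * f i) * (∑ i, δ i) := by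
    intro δ f
    rw [← hone δ f]
    calc (∑ i, ∑ j, δ i * δ j * f j) = ∑ j, ∑ i, δ i * δ j * f j := Finset.sum_comm
      _ = ∑ i, ∑ j, δ i * δ j * f i := by
          refine Finset.sum_congr rfl fun i _ => Finset.sum_congr rfl fun j _ => by ring
  have hbPSD : ∀ δ : Fin k → ℝ,
      0 ≤ ∑ i, ∑ j, δ i * δ j * (a i i0 + a j i0 - a i j) := by
    intro δ
    set s : ℝ := ∑ i, δ i with hs
    have hβsum : (∑ i, (δ i - (if i = i0 then s else 0))) = 0 := by
      simp only [Finset.sum_sub_distrib, Finset.sum_ite_eq', Finset.mem_univ, if_true]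
      simp [hs]
    have h1 := hneg _ hβsum
    have T2 : (∑ i, ∑ j, δ i * ((if j = i0 then s else 0) * a i j))
        = s * ∑ i, δ i * a i i0 := by
      have hin : ∀ i : Fin k, (∑ j, δ i * ((if j = i0 then s else 0) * a i j))
          = s * (δ i * a i i0) := by
        intro i
        rw [Finset.sum_eq_single i0]
        · simp only [eq_self_iff_true, if_true]; ring
        · intro j _ hj; simp [hj]
        · intro h; exact absurd (Finset.mem_univ i0) h
      rw [Finset.sum_congr rfl fun i _ => hin i, ← Finset.mul_sum]
    have T3 : (∑ i, ∑ j, (if i = i0 then s else 0) * (δ j * a i j))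
        = s * ∑ i, δ i * a i i0 := by
      rw [Finset.sum_eq_single i0]
      · simp only [if_pos rfl]
        rw [← Finset.mul_sum]
        congr 1
        exact Finset.sum_congr rfl fun j _ => by rw [hsymm i0 j]
      · intro j _ hj; simp [hj]
      · intro h; exact absurd (Finset.mem_univ i0) h
    have T4 : (∑ i, ∑ j, (if i = i0 then s else 0) * ((if j = i0 then s else 0) * a i j))
        = 0 := by
      rw [Finset.sum_eq_single i0]
      · rw [Finset.sum_eq_single i0]
        · simp [hdiag i0]
        · intro j _ hj; simp [hj]
        · intro h; exact absurd (Finset.mem_univ i0) h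
      · intro j _ hj; simp [hj]
      · intro h; exact absurd (Finset.mem_univ i0) h
    have hexp : (∑ i, ∑ j, (δ i - (if i = i0 then s else 0)) * (δ j - (if j = i0 then s else 0)) * a i j)
        = (∑ i, ∑ j, δ i * δ j * a i j) - 2 * s * (∑ i, δ i * a i i0) := by
      have e1 : ∀ i j : Fin k, (δ i - (if i = i0 then s else 0)) * (δ j - (if j = i0 then s else 0)) * a i j
          = δ i * δ j * a i j - δ i * ((if j = i0 then s else 0) * a i j)
            - (if i = i0 then s else 0) * (δ j * a i j)
            + (if i = i0 then s else 0) * ((if j = i0 then s else 0) * a i j) := by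
        intro i j; ring
      rw [Finset.sum_congr rfl fun i _ => Finset.sum_congr rfl fun j _ => e1 i j]
      simp only [Finset.sum_add_distrib, Finset.sum_sub_distrib]
      rw [T2, T3, T4]
      ring
    have hb2 : (∑ i, ∑ j, δ i * δ j * (a i i0 + a j i0 - a i j))
        = 2 * s * (∑ i, δ i * a i i0) - (∑ i, ∑ j, δ i * δ j * a i j) := by
      have e2 : ∀ i j : Fin k, δ i * δ j * (a i i0 + a j i0 - a i j)
          = δ i * δ j * a i i0 + δ i * δ j * a j i0 - δ i * δ j * a i j := by
        intro i j; ring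
      rw [Finset.sum_congr rfl fun i _ => Finset.sum_congr rfl fun j _ => e2 i j]
      simp only [Finset.sum_add_distrib, Finset.sum_sub_distrib]
      rw [hone δ (fun i => a i i0), htwo δ (fun i => a i i0)]
      simp only [← hs]
      ring
    rw [hb2]
    rw [hexp] at h1
    linarith
  have key := psd_form_exp_nonneg (fun i j => a i i0 + a j i0 - a i j)
    (fun i j => by rw [hsymm i j]; ring) hbPSD
    (fun i => γ i * Real.exp (-a i i0))
  refine le_of_le_of_eq key ?_
  refine Finset.sum_congr rfl fun i _ => Finset.sum_congr rfl fun j _ => ?_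
  have hexpeq : Real.exp (a i i0 + a j i0 - a i j)
      = Real.exp (a i i0) * Real.exp (a j i0) * Real.exp (-a i j) := by
    rw [← Real.exp_add, ← Real.exp_add]
    exact congrArg Real.exp (by ring)
  rw [hexpeq]
  have h2 : γ i * Real.exp (-a i i0) * (γ j * Real.exp (-a j i0))
        * (Real.exp (a i i0) * Real.exp (a j i0) * Real.exp (-a i j))
      = (γ i * γ j * Real.exp (-a i j))
        * ((Real.exp (-a i i0) * Real.exp (a i i0)) * (Real.exp (-a j i0) * Real.exp (a j i0))) := by
    ring
  rw [h2, ← Real.exp_add, ← Real.exp_add]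
  simp




lemma phi_contOn {θ : ℝ} (t : ℝ) (s : Set ℝ) (hs : ∀ x ∈ s, x ≠ 0) :
    ContinuousOn (fun l : ℝ => (1 - Real.exp (-(t * l))) * l ^ (-θ - 1)) s := by
  refine ContinuousOn.mul ?_ ?_
  · exact (continuous_const.sub ((continuous_const.mul continuous_id).neg.rexp)).continuousOn
  · exact ContinuousOn.rpow_const continuousOn_id (fun x hx => Or.inl (hs x hx))

lemma phi_integrable {θ : ℝ} (hθ0 : 0 < θ) (hθ1 : θ < 1) {t : ℝ} (ht : 0 ≤ t) :
    IntegrableOn (fun l : ℝ => (1 - Real.exp (-(t * l))) * l ^ (-θ - 1)) (Ioi (0:ℝ)) := by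
  have hnn : ∀ l : ℝ, 0 < l → 0 ≤ (1 - Real.exp (-(t * l))) * l ^ (-θ - 1) := by
    intro l hl
    apply mul_nonneg
    · have : Real.exp (-(t * l)) ≤ 1 := by
        rw [Real.exp_le_one_iff]
        exact neg_nonpos.mpr (mul_nonneg ht hl.le)
      linarith
    · exact Real.rpow_nonneg hl.le _
  have h1 : IntegrableOn (fun l : ℝ => (1 - Real.exp (-(t * l))) * l ^ (-θ - 1)) (Ioc (0:ℝ) 1) := by
    have hmaj : IntegrableOn (fun l : ℝ => t * l ^ (-θ)) (Ioc (0:ℝ) 1) := by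
      have := (intervalIntegral.intervalIntegrable_rpow' (a := 0) (b := 1)
        (r := -θ) (by linarith)).const_mul t
      rwa [intervalIntegrable_iff_integrableOn_Ioc_of_le (by norm_num)] at this
    refine hmaj.integrable.mono ?_ ?_
    · exact (phi_contOn t _ (fun x hx => ne_of_gt hx.1)).aestronglyMeasurable measurableSet_Ioc
    · refine (ae_restrict_iff' measurableSet_Ioc).mpr (ae_of_all _ fun l hl => ?_)
      have hl0 : 0 < l := hl.1
      rw [Real.norm_eq_abs, Real.norm_eq_abs, abs_of_nonneg (hnn l hl0)]
      have hb : 1 - Real.exp (-(t * l)) ≤ t * l := by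
        have := Real.add_one_le_exp (-(t * l))
        linarith
      have h2 : (1 - Real.exp (-(t * l))) * l ^ (-θ - 1) ≤ (t * l) * l ^ (-θ - 1) :=
        mul_le_mul_of_nonneg_right hb (Real.rpow_nonneg hl0.le _)
      have h3 : (t * l) * l ^ (-θ - 1) = t * l ^ (-θ) := by
        rw [mul_assoc]
        congr 1
        nth_rewrite 1 [← Real.rpow_one l]
        rw [← Real.rpow_add hl0]
        congr 1
        ring
      rw [h3] at h2
      refine h2.trans (le_abs_self _)
  have h2 : IntegrableOn (fun l : ℝ => (1 - Real.exp (-(t * l))) * l ^ (-θ - 1)) (Ioi (1:ℝ)) := by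
    have hmaj : IntegrableOn (fun l : ℝ => l ^ (-θ - 1)) (Ioi (1:ℝ)) :=
      integrableOn_Ioi_rpow_of_lt (by linarith) one_pos
    refine hmaj.integrable.mono ?_ ?_
    · exact (phi_contOn t _ (fun x hx => ne_of_gt (lt_trans one_pos hx))).aestronglyMeasurable measurableSet_Ioi
    · refine (ae_restrict_iff' measurableSet_Ioi).mpr (ae_of_all _ fun l hl => ?_)
      have hl0 : (0:ℝ) < l := lt_trans one_pos hl
      rw [Real.norm_eq_abs, Real.norm_eq_abs, abs_of_nonneg (hnn l hl0)]
      have hb : 1 - Real.exp (-(t * l)) ≤ 1 := by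
        have := Real.exp_pos (-(t * l)); linarith
      have h2 : (1 - Real.exp (-(t * l))) * l ^ (-θ - 1) ≤ 1 * l ^ (-θ - 1) :=
        mul_le_mul_of_nonneg_right hb (Real.rpow_nonneg hl0.le _)
      rw [one_mul] at h2
      exact h2.trans (le_abs_self _)
  have := h1.union h2
  rwa [Set.Ioc_union_Ioi_eq_Ioi (zero_le_one)] at this


lemma phi_scale {θ : ℝ} (hθ0 : 0 < θ) (hθ1 : θ < 1) {t : ℝ} (ht : 0 ≤ t) :
    (∫ l in Ioi (0:ℝ), (1 - Real.exp (-(t * l))) * l ^ (-θ - 1))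
      = t ^ θ * ∫ l in Ioi (0:ℝ), (1 - Real.exp (-l)) * l ^ (-θ - 1) := by
  rcases eq_or_lt_of_le ht with h0 | h0
  · rw [← h0]
    simp [Real.zero_rpow hθ0.ne']
  · have hsub := MeasureTheory.integral_comp_mul_left_Ioi
      (fun u : ℝ => (1 - Real.exp (-u)) * u ^ (-θ - 1)) 0 h0
    rw [mul_zero] at hsub
    have hpow : t ^ (θ + 1) * t ^ (-θ - 1) = 1 := by
      rw [← Real.rpow_add h0]
      norm_num
    have hcong : ∀ l ∈ Ioi (0:ℝ),
        (1 - Real.exp (-(t * l))) * l ^ (-θ - 1)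
          = t ^ (θ + 1) * ((1 - Real.exp (-(t * l))) * (t * l) ^ (-θ - 1)) := by
      intro l hl
      rw [Real.mul_rpow h0.le (le_of_lt hl)]
      calc (1 - Real.exp (-(t * l))) * l ^ (-θ - 1)
          = (t ^ (θ + 1) * t ^ (-θ - 1)) * ((1 - Real.exp (-(t * l))) * l ^ (-θ - 1)) := by
            rw [hpow, one_mul]
        _ = t ^ (θ + 1) * ((1 - Real.exp (-(t * l))) * (t ^ (-θ - 1) * l ^ (-θ - 1))) := by ring
    calc (∫ l in Ioi (0:ℝ), (1 - Real.exp (-(t * l))) * l ^ (-θ - 1))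
        = ∫ l in Ioi (0:ℝ), t ^ (θ + 1) * ((1 - Real.exp (-(t * l))) * (t * l) ^ (-θ - 1)) :=
          setIntegral_congr_fun measurableSet_Ioi hcong
      _ = t ^ (θ + 1) * ∫ l in Ioi (0:ℝ), (1 - Real.exp (-(t * l))) * (t * l) ^ (-θ - 1) :=
          MeasureTheory.integral_const_mul _ _
      _ = t ^ (θ + 1) * (t⁻¹ • ∫ u in Ioi (0:ℝ), (1 - Real.exp (-u)) * u ^ (-θ - 1)) := by
          rw [hsub]
      _ = t ^ θ * ∫ l in Ioi (0:ℝ), (1 - Real.exp (-l)) * l ^ (-θ - 1) := by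
          rw [smul_eq_mul, ← mul_assoc]
          congr 1
          rw [show θ + 1 = θ + 1 from rfl, Real.rpow_add h0, Real.rpow_one]
          field_simp

lemma K_pos {θ : ℝ} (hθ0 : 0 < θ) (hθ1 : θ < 1) :
    0 < ∫ l in Ioi (0:ℝ), (1 - Real.exp (-l)) * l ^ (-θ - 1) := by
  have hint : IntegrableOn (fun l : ℝ => (1 - Real.exp (-l)) * l ^ (-θ - 1)) (Ioi (0:ℝ)) := by
    have := phi_integrable hθ0 hθ1 (t := 1) zero_le_one
    refine this.congr_fun (fun l _ => by simp only [one_mul]) measurableSet_Ioi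
  have hnn : 0 ≤ᵐ[volume.restrict (Ioi (0:ℝ))]
      (fun l : ℝ => (1 - Real.exp (-l)) * l ^ (-θ - 1)) := by
    refine (ae_restrict_iff' measurableSet_Ioi).mpr (ae_of_all _ fun l hl => ?_)
    have hl : (0:ℝ) < l := hl
    apply mul_nonneg
    · have : Real.exp (-l) ≤ 1 := by
        rw [Real.exp_le_one_iff]; linarith
      linarith
    · exact Real.rpow_nonneg hl.le _
  rw [setIntegral_pos_iff_support_of_nonneg_ae hnn hint]
  have hsubset : Ioi (0:ℝ) ⊆ Function.support (fun l : ℝ => (1 - Real.exp (-l)) * l ^ (-θ - 1)) ∩ Ioi 0 := by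
    intro l hl
    have hl0 : (0:ℝ) < l := hl
    refine ⟨?_, hl⟩
    have h1 : 0 < 1 - Real.exp (-l) := by
      have : Real.exp (-l) < 1 := Real.exp_lt_one_iff.mpr (by linarith)
      linarith
    have h2 : (0:ℝ) < l ^ (-θ - 1) := Real.rpow_pos_of_pos hl0 _
    exact ne_of_gt (mul_pos h1 h2)
  calc (0:ENNReal) < volume (Ioi (0:ℝ)) := by rw [Real.volume_Ioi]; exact ENNReal.zero_lt_top
    _ ≤ _ := measure_mono hsubset


end NegTypeAux



open NegTypeAux Finset

/-- If a finite metric space has `p`-negative type for some `p > 0`, then for every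
`0 ≤ q < p` it has strict `q`-negative type. -/
theorem finite_metric_strict_neg_type_below {X : Type*} [MetricSpace X] [Fintype X]
    (p : ℝ) (hp : 0 < p)
    (hneg : ∀ (k : ℕ) (x : Fin k → X), Function.Injective x →
      ∀ α : Fin k → ℝ, (∑ i, α i) = 0 →
        (∑ i, ∑ j, (if i = j then (0 : ℝ) else dist (x i) (x j) ^ p) * α i * α j) ≤ 0)
    (q : ℝ) (hq0 : 0 ≤ q) (hqp : q < p) :
    ∀ (k : ℕ) (x : Fin k → X), Function.Injective x →
      ∀ α : Fin k → ℝ, (∑ i, α i) = 0 →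
        (∑ i, ∑ j, (if i = j then (0 : ℝ) else dist (x i) (x j) ^ q) * α i * α j) ≤ 0 ∧
        ((∑ i, ∑ j, (if i = j then (0 : ℝ) else dist (x i) (x j) ^ q) * α i * α j) = 0 →
          α = 0) := by
  intro k x hinj α hsum
  by_cases hq : q = 0
  · -- the case q = 0 is elementary
    subst hq
    have hS : (∑ i, ∑ j, (if i = j then (0:ℝ) else dist (x i) (x j) ^ (0:ℝ)) * α i * α j)
        = -∑ i, (α i)^2 := by
      have hinner : ∀ i : Fin k,
          (∑ j, (if i = j then (0:ℝ) else dist (x i) (x j) ^ (0:ℝ)) * α i * α j)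
            = -(α i)^2 := by
        intro i
        have hterm : ∀ j : Fin k, (if i = j then (0:ℝ) else dist (x i) (x j) ^ (0:ℝ)) * α i * α j
            = α i * α j - (if i = j then α i * α j else 0) := by
          intro j
          by_cases h : i = j <;> simp [h, Real.rpow_zero]
        rw [Finset.sum_congr rfl fun j _ => hterm j, Finset.sum_sub_distrib,
          Finset.sum_ite_eq _ i (fun j => α i * α j)]
        simp only [Finset.mem_univ, if_true, ← Finset.mul_sum, hsum, mul_zero]
        ring
      rw [Finset.sum_congr rfl fun i _ => hinner i]
      rw [Finset.sum_neg_distrib]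
    constructor
    · rw [hS]
      exact neg_nonpos.mpr (Finset.sum_nonneg fun i _ => sq_nonneg _)
    · intro h0
      rw [hS, neg_eq_zero] at h0
      funext i
      have := (Finset.sum_eq_zero_iff_of_nonneg (fun i _ => sq_nonneg (α i))).mp h0 i (Finset.mem_univ i)
      exact pow_eq_zero_iff (n := 2) (by norm_num) |>.mp this
  · have hq' : 0 < q := lt_of_le_of_ne hq0 (Ne.symm hq)
    set θ : ℝ := q / p with hθdef
    have hθ0 : 0 < θ := div_pos hq' hp
    have hθ1 : θ < 1 := (div_lt_one hp).mpr hqp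
    set t : Fin k → Fin k → ℝ := fun i j => dist (x i) (x j) ^ p with htdef
    have ht0 : ∀ i j, 0 ≤ t i j := fun i j => Real.rpow_nonneg dist_nonneg _
    have htsym : ∀ i j, t i j = t j i := fun i j => by simp only [htdef]; rw [dist_comm]
    have htdiag : ∀ i, t i i = 0 := fun i => by
      simp [htdef, dist_self, Real.zero_rpow hp.ne']
    have htpos : ∀ i j, i ≠ j → 0 < t i j := fun i j hij =>
      Real.rpow_pos_of_pos (dist_pos.mpr fun h => hij (hinj h)) _
    -- rewrite the goal sum
    have hpθ : p * θ = q := by rw [hθdef, mul_comm, div_mul_cancel₀ q hp.ne']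
    have hSq : (∑ i, ∑ j, (if i = j then (0:ℝ) else dist (x i) (x j) ^ q) * α i * α j)
        = ∑ ij : Fin k × Fin k, α ij.1 * α ij.2 * (t ij.1 ij.2) ^ θ := by
      rw [Fintype.sum_prod_type]
      refine Finset.sum_congr rfl fun i _ => Finset.sum_congr rfl fun j _ => ?_
      by_cases h : i = j
      · subst h
        simp [htdiag i, Real.zero_rpow hθ0.ne']
      · rw [if_neg h]
        have : (t i j) ^ θ = dist (x i) (x j) ^ q := by
          rw [htdef, ← Real.rpow_mul dist_nonneg, hpθ]
        rw [this]; ring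
    -- p-negative type in clean form
    have hnegt : ∀ β : Fin k → ℝ, (∑ i, β i) = 0 →
        (∑ i, ∑ j, β i * β j * t i j) ≤ 0 := by
      intro β hβ
      have h := hneg k x hinj β hβ
      have he : (∑ i, ∑ j, (if i = j then (0:ℝ) else dist (x i) (x j) ^ p) * β i * β j)
          = ∑ i, ∑ j, β i * β j * t i j := by
        refine Finset.sum_congr rfl fun i _ => Finset.sum_congr rfl fun j _ => ?_
        by_cases hij : i = j
        · subst hij; simp [htdiag i]
        · rw [if_neg hij]; simp only [htdef]; ring
      rwa [he] at h
    -- Schoenberg positivity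
    have hg : ∀ l : ℝ, 0 ≤ l →
        0 ≤ ∑ ij : Fin k × Fin k, α ij.1 * α ij.2 * Real.exp (-(t ij.1 ij.2 * l)) := by
      intro l hl
      have key := schoenberg_nonneg (fun i j => t i j * l)
        (fun i j => by simp [htsym i j]) (fun i => by simp [htdiag i])
        (fun β hβ => by
          have h1 : (∑ i, ∑ j, β i * β j * (t i j * l))
              = (∑ i, ∑ j, β i * β j * t i j) * l := by
            rw [Finset.sum_mul]
            refine Finset.sum_congr rfl fun i _ => ?_
            rw [Finset.sum_mul]
            exact Finset.sum_congr rfl fun j _ => by ring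
          rw [h1]
          exact mul_nonpos_iff.mpr (Or.inr ⟨hnegt β hβ, hl⟩)) α
      rw [Fintype.sum_prod_type]
      exact key
    -- integrability of the big integrand
    have hFint : IntegrableOn (fun l : ℝ => ∑ ij : Fin k × Fin k,
        α ij.1 * α ij.2 * ((1 - Real.exp (-(t ij.1 ij.2 * l))) * l ^ (-θ - 1)))
        (Ioi (0:ℝ)) :=
      integrable_finset_sum _ fun ij _ =>
        ((phi_integrable hθ0 hθ1 (ht0 ij.1 ij.2)).const_mul _)
    -- value of the big integral
    have hFval : (∫ l in Ioi (0:ℝ), ∑ ij : Fin k × Fin k,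
          α ij.1 * α ij.2 * ((1 - Real.exp (-(t ij.1 ij.2 * l))) * l ^ (-θ - 1)))
        = (∫ l in Ioi (0:ℝ), (1 - Real.exp (-l)) * l ^ (-θ - 1))
          * ∑ ij : Fin k × Fin k, α ij.1 * α ij.2 * (t ij.1 ij.2) ^ θ := by
      rw [MeasureTheory.integral_finset_sum _
        (fun ij _ => ((phi_integrable hθ0 hθ1 (ht0 ij.1 ij.2)).const_mul _))]
      rw [Finset.mul_sum]
      refine Finset.sum_congr rfl fun ij _ => ?_
      rw [MeasureTheory.integral_const_mul, phi_scale hθ0 hθ1 (ht0 ij.1 ij.2)]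
      ring
    -- pointwise identity on Ioi 0
    have hzero2 : (∑ ij : Fin k × Fin k, α ij.1 * α ij.2) = 0 := by
      rw [Fintype.sum_prod_type]
      have : ∀ i : Fin k, (∑ j, α i * α j) = α i * ∑ j, α j :=
        fun i => (Finset.mul_sum _ _ _).symm
      rw [Finset.sum_congr rfl fun i _ => this i]
      simp [hsum]
    have hFg : ∀ l ∈ Ioi (0:ℝ),
        (∑ ij : Fin k × Fin k, α ij.1 * α ij.2 * ((1 - Real.exp (-(t ij.1 ij.2 * l))) * l ^ (-θ - 1)))
          = -((∑ ij : Fin k × Fin k, α ij.1 * α ij.2 * Real.exp (-(t ij.1 ij.2 * l))) * l ^ (-θ - 1)) := by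
      intro l _
      calc (∑ ij : Fin k × Fin k, α ij.1 * α ij.2 * ((1 - Real.exp (-(t ij.1 ij.2 * l))) * l ^ (-θ - 1)))
          = ∑ ij : Fin k × Fin k, (α ij.1 * α ij.2 * l ^ (-θ - 1)
              - α ij.1 * α ij.2 * Real.exp (-(t ij.1 ij.2 * l)) * l ^ (-θ - 1)) :=
            Finset.sum_congr rfl fun ij _ => by ring
        _ = (∑ ij : Fin k × Fin k, α ij.1 * α ij.2 * l ^ (-θ - 1))
            - ∑ ij : Fin k × Fin k, α ij.1 * α ij.2 * Real.exp (-(t ij.1 ij.2 * l)) * l ^ (-θ - 1) :=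
            Finset.sum_sub_distrib _ _
        _ = (∑ ij : Fin k × Fin k, α ij.1 * α ij.2) * l ^ (-θ - 1)
            - (∑ ij : Fin k × Fin k, α ij.1 * α ij.2 * Real.exp (-(t ij.1 ij.2 * l))) * l ^ (-θ - 1) := by
            rw [Finset.sum_mul, Finset.sum_mul]
        _ = -((∑ ij : Fin k × Fin k, α ij.1 * α ij.2 * Real.exp (-(t ij.1 ij.2 * l))) * l ^ (-θ - 1)) := by
            rw [hzero2, zero_mul]; ring
    have hIntF : (∫ l in Ioi (0:ℝ), ∑ ij : Fin k × Fin k,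
          α ij.1 * α ij.2 * ((1 - Real.exp (-(t ij.1 ij.2 * l))) * l ^ (-θ - 1)))
        = -∫ l in Ioi (0:ℝ),
            (∑ ij : Fin k × Fin k, α ij.1 * α ij.2 * Real.exp (-(t ij.1 ij.2 * l))) * l ^ (-θ - 1) := by
      rw [setIntegral_congr_fun measurableSet_Ioi hFg, integral_neg]
    have hgwnn : ∀ l ∈ Ioi (0:ℝ),
        0 ≤ (∑ ij : Fin k × Fin k, α ij.1 * α ij.2 * Real.exp (-(t ij.1 ij.2 * l))) * l ^ (-θ - 1) :=
      fun l hl => mul_nonneg (hg l (le_of_lt hl)) (Real.rpow_nonneg (le_of_lt hl) _)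
    have hIgw : 0 ≤ ∫ l in Ioi (0:ℝ),
        (∑ ij : Fin k × Fin k, α ij.1 * α ij.2 * Real.exp (-(t ij.1 ij.2 * l))) * l ^ (-θ - 1) :=
      setIntegral_nonneg measurableSet_Ioi hgwnn
    have hK := K_pos hθ0 hθ1
    have hKS : (∫ l in Ioi (0:ℝ), (1 - Real.exp (-l)) * l ^ (-θ - 1))
          * (∑ ij : Fin k × Fin k, α ij.1 * α ij.2 * (t ij.1 ij.2) ^ θ) ≤ 0 := by
      rw [← hFval, hIntF]
      linarith
    have hSqle : (∑ ij : Fin k × Fin k, α ij.1 * α ij.2 * (t ij.1 ij.2) ^ θ) ≤ 0 := by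
      nlinarith
    constructor
    · rw [hSq]; exact hSqle
    · intro h0
      rw [hSq] at h0
      -- the integral of the nonnegative function vanishes
      have hFzero : (∫ l in Ioi (0:ℝ), ∑ ij : Fin k × Fin k,
          α ij.1 * α ij.2 * ((1 - Real.exp (-(t ij.1 ij.2 * l))) * l ^ (-θ - 1))) = 0 := by
        rw [hFval, h0, mul_zero]
      have hgwzero : (∫ l in Ioi (0:ℝ),
          (∑ ij : Fin k × Fin k, α ij.1 * α ij.2 * Real.exp (-(t ij.1 ij.2 * l))) * l ^ (-θ - 1)) = 0 := by
        rw [hIntF] at hFzero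
        linarith
      have hgwint : IntegrableOn (fun l : ℝ =>
          (∑ ij : Fin k × Fin k, α ij.1 * α ij.2 * Real.exp (-(t ij.1 ij.2 * l))) * l ^ (-θ - 1))
          (Ioi (0:ℝ)) := by
        refine MeasureTheory.IntegrableOn.congr_fun hFint.neg (fun l hl => ?_) measurableSet_Ioi
        simp only [Pi.neg_apply]
        rw [hFg l hl]
        ring
      have hnn_ae : 0 ≤ᵐ[volume.restrict (Ioi (0:ℝ))] (fun l : ℝ =>
          (∑ ij : Fin k × Fin k, α ij.1 * α ij.2 * Real.exp (-(t ij.1 ij.2 * l))) * l ^ (-θ - 1)) :=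
        (ae_restrict_iff' measurableSet_Ioi).mpr (ae_of_all _ hgwnn)
      have haezero := (MeasureTheory.integral_eq_zero_iff_of_nonneg_ae hnn_ae hgwint).mp hgwzero
      have hnull : volume.restrict (Ioi (0:ℝ)) {l : ℝ |
          (∑ ij : Fin k × Fin k, α ij.1 * α ij.2 * Real.exp (-(t ij.1 ij.2 * l))) * l ^ (-θ - 1) ≠ 0} = 0 := by
        have := ae_iff.mp haezero
        simpa using this
      have hzero_far : ∀ n : ℕ, ∃ l : ℝ, (n:ℝ) < l ∧
          (∑ ij : Fin k × Fin k, α ij.1 * α ij.2 * Real.exp (-(t ij.1 ij.2 * l))) = 0 := by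
        intro n
        by_contra hcon
        push_neg at hcon
        have hsub : Ioi ((n:ℝ)) ⊆ {l : ℝ |
            (∑ ij : Fin k × Fin k, α ij.1 * α ij.2 * Real.exp (-(t ij.1 ij.2 * l))) * l ^ (-θ - 1) ≠ 0} := by
          intro l hl
          have hl0 : (0:ℝ) < l := lt_of_le_of_lt (Nat.cast_nonneg n) hl
          exact mul_ne_zero (hcon l hl) (ne_of_gt (Real.rpow_pos_of_pos hl0 _))
        have h1 : volume.restrict (Ioi (0:ℝ)) (Ioi ((n:ℝ))) = 0 :=
          measure_mono_null hsub hnull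
        rw [Measure.restrict_apply measurableSet_Ioi] at h1
        rw [Set.inter_eq_self_of_subset_left (Set.Ioi_subset_Ioi (Nat.cast_nonneg n))] at h1
        rw [Real.volume_Ioi] at h1
        exact ENNReal.top_ne_zero h1
      -- conclude each α i = 0 via a limit argument
      have hαsq : ∀ n : ℕ, (∑ i, (α i)^2)
          ≤ ∑ ij ∈ (Finset.univ : Finset (Fin k)).offDiag,
              |α ij.1 * α ij.2| * Real.exp (-(t ij.1 ij.2 * n)) := by
        intro n
        obtain ⟨l, hln, hgl⟩ := hzero_far n
        have hsplit : (∑ ij : Fin k × Fin k, α ij.1 * α ij.2 * Real.exp (-(t ij.1 ij.2 * l)))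
            = (∑ i, (α i)^2)
              + ∑ ij ∈ (Finset.univ : Finset (Fin k)).offDiag,
                  α ij.1 * α ij.2 * Real.exp (-(t ij.1 ij.2 * l)) := by
          rw [show (Finset.univ : Finset (Fin k × Fin k)) = Finset.univ ×ˢ Finset.univ from
            Finset.univ_product_univ.symm, ← Finset.diag_union_offDiag,
            Finset.sum_union (Finset.disjoint_diag_offDiag _), Finset.sum_diag]
          congr 1
          refine Finset.sum_congr rfl fun i _ => ?_
          rw [htdiag i, zero_mul, neg_zero, Real.exp_zero]
          ring
        have h2 : (∑ i, (α i)^2)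
            = -∑ ij ∈ (Finset.univ : Finset (Fin k)).offDiag,
                α ij.1 * α ij.2 * Real.exp (-(t ij.1 ij.2 * l)) := by
          rw [hsplit] at hgl; linarith
        rw [h2]
        refine (neg_le_abs _).trans ?_
        refine (Finset.abs_sum_le_sum_abs _ _).trans ?_
        refine Finset.sum_le_sum fun ij hij => ?_
        rw [abs_mul, Real.abs_exp]
        refine mul_le_mul_of_nonneg_left ?_ (abs_nonneg _)
        rw [Real.exp_le_exp]
        have := mul_le_mul_of_nonneg_left hln.le (ht0 ij.1 ij.2)
        linarith
      have htendsto : Tendsto (fun n : ℕ => ∑ ij ∈ (Finset.univ : Finset (Fin k)).offDiag,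
          |α ij.1 * α ij.2| * Real.exp (-(t ij.1 ij.2 * n))) atTop (nhds 0) := by
        have h0 : (0:ℝ) = ∑ ij ∈ (Finset.univ : Finset (Fin k)).offDiag, (0:ℝ) := by simp
        rw [h0]
        refine tendsto_finset_sum _ fun ij hij => ?_
        have hijne : ij.1 ≠ ij.2 := (Finset.mem_offDiag.mp hij).2.2
        have htp := htpos ij.1 ij.2 hijne
        have h1 : Tendsto (fun n : ℕ => -(t ij.1 ij.2 * (n:ℝ))) atTop atBot := by
          refine tendsto_neg_atTop_atBot.comp ?_
          exact (tendsto_natCast_atTop_atTop).const_mul_atTop htp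
        have h2 : Tendsto (fun n : ℕ => Real.exp (-(t ij.1 ij.2 * (n:ℝ)))) atTop (nhds 0) :=
          Real.tendsto_exp_atBot.comp h1
        have h3 := h2.const_mul (|α ij.1 * α ij.2|)
        simpa using h3
      have hfinal : (∑ i, (α i)^2) ≤ 0 := ge_of_tendsto' htendsto hαsq
      have hsum0 : (∑ i, (α i)^2) = 0 :=
        le_antisymm hfinal (Finset.sum_nonneg fun i _ => sq_nonneg _)
      funext i
      have := (Finset.sum_eq_zero_iff_of_nonneg (fun i _ => sq_nonneg (α i))).mp hsum0 i
        (Finset.mem_univ i)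
      exact pow_eq_zero_iff (n := 2) (by norm_num) |>.mp this
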